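/- If A, B ⊆ ℝ are nonempty sets with B ⊆ [0, ε), then for any 0 < γ < ε, the covering number satisfies N_γ(A+B) ≥ (1/3) · N_ε(A) · N_γ(B). -/

import Mathlib

open Set Pointwise

/-- The covering number of `Y` at scale `ε`: the minimal number of sets of
diameter at most `ε` needed to cover `Y`. -/
noncomputable def covN (ε : ℝ) (Y : Set ℝ) : ℕ :=
  sInf {n : ℕ | ∃ c : Fin n → Set ℝ,
    (∀ i, EMetric.diam (c i) ≤ ENNReal.ofReal ε) ∧ Y ⊆ ⋃ i, c i}

lemma mem_covSet {ε : ℝ} {Y : Set ℝ} {ι : Type} [Fintype ι] (c : ι → Set ℝ)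
    (h1 : ∀ i, EMetric.diam (c i) ≤ ENNReal.ofReal ε) (h2 : Y ⊆ ⋃ i, c i) :
    Fintype.card ι ∈ {n : ℕ | ∃ c : Fin n → Set ℝ,
      (∀ i, EMetric.diam (c i) ≤ ENNReal.ofReal ε) ∧ Y ⊆ ⋃ i, c i} := by
  refine ⟨fun i => c ((Fintype.equivFin ι).symm i), fun i => h1 _, ?_⟩
  intro x hx
  obtain ⟨i, hi⟩ := mem_iUnion.mp (h2 hx)
  exact mem_iUnion.mpr ⟨Fintype.equivFin ι i, by simpa using hi⟩

lemma covN_le_card {ε : ℝ} {Y : Set ℝ} {ι : Type} [Fintype ι] (c : ι → Set ℝ)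
    (h1 : ∀ i, EMetric.diam (c i) ≤ ENNReal.ofReal ε) (h2 : Y ⊆ ⋃ i, c i) :
    covN ε Y ≤ Fintype.card ι :=
  Nat.sInf_le (mem_covSet c h1 h2)

lemma covSet_nonempty {ε : ℝ} (hε : 0 < ε) {Y : Set ℝ} (hY : Bornology.IsBounded Y) :
    {n : ℕ | ∃ c : Fin n → Set ℝ,
      (∀ i, EMetric.diam (c i) ≤ ENNReal.ofReal ε) ∧ Y ⊆ ⋃ i, c i}.Nonempty := by
  have htb : TotallyBounded Y :=
    (hY.isCompact_closure.totallyBounded).subset subset_closure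
  obtain ⟨t, htf, hcov⟩ := Metric.totallyBounded_iff.mp htb (ε / 2) (by linarith)
  haveI : Fintype ↑t := htf.fintype
  refine ⟨Fintype.card ↑t, ?_⟩
  apply mem_covSet (fun y : ↑t => Metric.ball (y : ℝ) (ε / 2))
  · intro i
    rw [Real.ball_eq_Ioo, EMetric.diam, Real.ediam_Ioo]
    apply ENNReal.ofReal_le_ofReal; linarith
  · intro x hx
    obtain ⟨y, hy, hxy⟩ := mem_iUnion₂.mp (hcov hx)
    exact mem_iUnion.mpr ⟨⟨y, hy⟩, hxy⟩

/-- Greedy construction of a strictly `s`-separated subset of `A` whose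
`[x - δ, x + s]` neighborhoods cover `A`. -/
lemma exists_sep_net (s δ : ℝ) (hs : 0 < s) (hδ : 0 < δ) :
    ∀ n : ℕ, ∀ A : Set ℝ, A.Nonempty → Bornology.IsBounded A →
    sSup A - sInf A < n * s →
    ∃ T : Finset ℝ, T.Nonempty ∧ ↑T ⊆ A ∧
      ((T : Set ℝ).Pairwise fun x y => s < |x - y|) ∧
      A ⊆ ⋃ x ∈ T, Icc (x - δ) (x + s) := by
  intro n
  induction n with
  | zero =>
    intro A hA hbd h
    exfalso
    have h1 : sInf A ≤ sSup A := Real.sInf_le_sSup A hbd.bddBelow hbd.bddAbove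
    simp at h
    linarith
  | succ n ih =>
    intro A hA hbd h
    obtain ⟨x₀, hx₀A, hx₀⟩ := Real.lt_sInf_add_pos hA hδ
    set A' := {x ∈ A | x₀ + s < x} with hA'def
    have hA'sub : A' ⊆ A := fun x hx => hx.1
    have hsInfle : sInf A ≤ x₀ := csInf_le hbd.bddBelow hx₀A
    by_cases hA' : A'.Nonempty
    · have hbd' : Bornology.IsBounded A' := hbd.subset hA'sub
      have h1 : sSup A' ≤ sSup A := csSup_le_csSup hbd.bddAbove hA' hA'sub
      have h2 : x₀ + s ≤ sInf A' := le_csInf hA' fun x hx => le_of_lt hx.2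
      have h3 : sSup A' - sInf A' < n * s := by
        have : (↑(n + 1) : ℝ) * s = n * s + s := by push_cast; ring
        linarith [this ▸ h]
      obtain ⟨T', hT'ne, hT'sub, hT'pw, hT'cov⟩ := ih A' hA' hbd' h3
      have hx₀T' : ∀ t ∈ T', x₀ + s < t := fun t ht => (hT'sub ht).2
      refine ⟨insert x₀ T', Finset.insert_nonempty _ _, ?_, ?_, ?_⟩
      · rw [Finset.coe_insert]
        exact Set.insert_subset hx₀A (fun t ht => hA'sub (hT'sub ht))
      · rw [Finset.coe_insert]
        apply Set.Pairwise.insert hT'pw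
        intro t ht hne
        have := hx₀T' t ht
        constructor
        · rw [abs_sub_comm]; rw [abs_of_pos (by linarith)]; linarith
        · rw [abs_of_pos (by linarith)]; linarith
      · intro x hx
        by_cases hx' : x ∈ A'
        · obtain ⟨t, ht, hxt⟩ := mem_iUnion₂.mp (hT'cov hx')
          exact mem_iUnion₂.mpr ⟨t, Finset.mem_insert_of_mem ht, hxt⟩
        · have hle : x ≤ x₀ + s := by
            by_contra hc
            exact hx' ⟨hx, lt_of_not_ge hc⟩
          have hge : sInf A ≤ x := csInf_le hbd.bddBelow hx
          exact mem_iUnion₂.mpr ⟨x₀, Finset.mem_insert_self _ _,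
            ⟨by linarith, hle⟩⟩
    · refine ⟨{x₀}, Finset.singleton_nonempty _, by simpa using hx₀A, by simp, ?_⟩
      intro x hx
      have hle : x ≤ x₀ + s := by
        by_contra hc
        exact hA' ⟨x, hx, lt_of_not_ge hc⟩
      have hge : sInf A ≤ x := csInf_le hbd.bddBelow hx
      simp only [Finset.mem_singleton, mem_iUnion₂]
      exact ⟨x₀, rfl, ⟨by linarith, hle⟩⟩

theorem covering_number_sumset (A B : Set ℝ) (ε γ : ℝ)
    (hA : A.Nonempty) (hB : B.Nonempty) (hAbd : Bornology.IsBounded A)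
    (hBsub : B ⊆ Set.Ico 0 ε) (hγ : 0 < γ) (hγε : γ < ε) :
    (covN γ (A + B) : ℝ) ≥ (1 / 3) * (covN ε A : ℝ) * (covN γ B : ℝ) := by
  classical
  have hε : 0 < ε := hγ.trans hγε
  set s : ℝ := ε + γ with hsdef
  set δ : ℝ := ε - γ with hδdef
  have hs : 0 < s := by positivity
  have hδ : 0 < δ := by simp [hδdef]; linarith
  -- get the separated net
  obtain ⟨n, hn⟩ := exists_nat_gt ((sSup A - sInf A) / s)
  have hlt : sSup A - sInf A < n * s := by
    rw [div_lt_iff₀ hs] at hn; linarith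
  obtain ⟨T, hTne, hTsub, hTpw, hTcov⟩ := exists_sep_net s δ hs hδ n A hA hAbd hlt
  set m : ℕ := T.card with hmdef
  set N : ℕ := covN γ B with hNdef
  -- upper bound: covN ε A ≤ 2 * m
  have hupper : covN ε A ≤ m * 2 := by
    have := covN_le_card (ε := ε) (ι := ↑T × Fin 2)
      (fun p => if p.2 = 0 then Icc ((p.1 : ℝ) - δ) ((p.1 : ℝ) - δ + ε)
        else Icc ((p.1 : ℝ) - δ + ε) ((p.1 : ℝ) + s))
      (fun p => by
        have e1 : s = ε + γ := hsdef
        have e2 : δ = ε - γ := hδdef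
        by_cases h : p.2 = 0
        · simp only [h, if_true, EMetric.diam, Real.ediam_Icc]
          apply ENNReal.ofReal_le_ofReal; linarith
        · simp only [h, if_false, EMetric.diam, Real.ediam_Icc]
          apply ENNReal.ofReal_le_ofReal; linarith)
      (Y := A) ?_
    · simpa [Fintype.card_coe] using this
    · intro x hx
      obtain ⟨t, ht, hxt⟩ := mem_iUnion₂.mp (hTcov hx)
      by_cases hc : x ≤ (t : ℝ) - δ + ε
      · refine mem_iUnion.mpr ⟨(⟨t, ht⟩, 0), ?_⟩
        show x ∈ Icc ((t : ℝ) - δ) ((t : ℝ) - δ + ε)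
        exact ⟨hxt.1, hc⟩
      · refine mem_iUnion.mpr ⟨(⟨t, ht⟩, 1), ?_⟩
        show x ∈ Icc ((t : ℝ) - δ + ε) ((t : ℝ) + s)
        exact ⟨(lt_of_not_ge hc).le, hxt.2⟩
  -- lower bound: m * N ≤ covN γ (A + B)
  have hABbd : Bornology.IsBounded (A + B) :=
    hAbd.add ((Metric.isBounded_Ico 0 ε).subset hBsub)
  have hlower : m * N ≤ covN γ (A + B) := by
    apply le_csInf (covSet_nonempty hγ hABbd)
    rintro n ⟨c, hc1, hc2⟩
    set S : ℝ → Finset (Fin n) :=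
      fun x => Finset.univ.filter (fun i => ∃ b ∈ B, x + b ∈ c i) with hSdef
    have hScard : ∀ x ∈ T, N ≤ (S x).card := by
      intro x hxT
      have := covN_le_card (ε := γ) (ι := ↑(S x))
        (fun i => (fun y => y - x) '' c i.1)
        (fun i => by
          have hiso : Isometry (fun y : ℝ => y - x) :=
            Isometry.of_dist_eq (by intro a b; simp [Real.dist_eq])
          rw [EMetric.diam, hiso.ediam_image]; exact hc1 _)
        (Y := B) ?_
      · simpa [Fintype.card_coe] using this
      · intro b hb
        have hxb : x + b ∈ A + B := add_mem_add (hTsub hxT) hb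
        obtain ⟨i, hi⟩ := mem_iUnion.mp (hc2 hxb)
        have hiS : i ∈ S x := by
          simp only [hSdef, Finset.mem_filter, Finset.mem_univ, true_and]
          exact ⟨b, hb, hi⟩
        exact mem_iUnion.mpr ⟨⟨i, hiS⟩, ⟨x + b, hi, by ring⟩⟩
    have hSdisj : ∀ x ∈ T, ∀ y ∈ T, x ≠ y → Disjoint (S x) (S y) := by
      intro x hx y hy hxy
      rw [Finset.disjoint_left]
      intro i hix hiy
      simp only [hSdef, Finset.mem_filter, Finset.mem_univ, true_and] at hix hiy
      obtain ⟨b, hb, hbc⟩ := hix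
      obtain ⟨b', hb', hbc'⟩ := hiy
      have hsep : s < |x - y| := hTpw hx hy hxy
      have hd : dist (x + b) (y + b') ≤ γ := by
        rw [← edist_le_ofReal hγ.le]
        exact le_trans (EMetric.edist_le_diam_of_mem hbc hbc') (hc1 i)
      rw [Real.dist_eq] at hd
      have hb1 := hBsub hb
      have hb2 := hBsub hb'
      simp only [mem_Ico] at hb1 hb2
      have key : |x - y| ≤ |x + b - (y + b')| + |b' - b| := by
        calc |x - y| = |(x + b - (y + b')) + (b' - b)| := by ring_nf
        _ ≤ _ := abs_add_le _ _
      have hbb : |b' - b| < ε := abs_sub_lt_iff.mpr ⟨by linarith, by linarith⟩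
      rw [hsdef] at hsep
      linarith
    have hsum : ∑ x ∈ T, (S x).card ≤ n := by
      rw [← Finset.card_biUnion hSdisj]
      simpa using Finset.card_le_univ (T.biUnion S)
    calc m * N = T.card • N := by rw [hmdef, smul_eq_mul]
    _ ≤ ∑ x ∈ T, (S x).card := Finset.card_nsmul_le_sum T _ N hScard
    _ ≤ n := hsum
  -- arithmetic
  have hm1 : (1 : ℕ) ≤ m := hTne.card_pos
  have h1 : (covN ε A : ℝ) ≤ 2 * m := by
    have := hupper; push_cast; rw [mul_comm]
    exact_mod_cast Nat.cast_le.mpr this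
  have h2 : (m : ℝ) * N ≤ covN γ (A + B) := by exact_mod_cast hlower
  have hN0 : (0 : ℝ) ≤ N := Nat.cast_nonneg _
  have hm0 : (0 : ℝ) ≤ m := Nat.cast_nonneg _
  have hAc : (0 : ℝ) ≤ (covN ε A : ℝ) := Nat.cast_nonneg _
  nlinarith
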